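/- For all integers n ≥ k ≥ 1, w(n,k) = ∑_{j=1}^{k} C(n-j, k-j) · N(n,j), where N(n,j) = (1/n)·C(n,j)·C(n,j-1) is the Narayana number. -/

import Mathlib

/-- `w(n,k) = C(n-1,k-1)·C(n+k,k) − C(n,k)·C(n+k,k-1)`. -/
def w (n k : ℕ) : ℤ :=
  ((n - 1).choose (k - 1) * (n + k).choose k : ℤ) - (n.choose k * (n + k).choose (k - 1) : ℤ)

/-- The Narayana number `N(n,j) = (1/n)·C(n,j)·C(n,j-1)`. -/
def narayana (n j : ℕ) : ℚ := ((n.choose j * n.choose (j - 1) : ℕ) : ℚ) / n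

/-- The sum collapses: `∑_{j=1}^k C(n-j,k-j)·C(n,j)·C(n,j-1) = C(n,k)·C(n+k,k-1)`. -/
lemma mySumCollapse (n k : ℕ) (hk : 1 ≤ k) (hkn : k ≤ n) :
    ∑ j ∈ Finset.Icc 1 k, (n - j).choose (k - j) * (n.choose j * n.choose (j - 1)) =
      n.choose k * (n + k).choose (k - 1) := by
  have h1 : ∀ j ∈ Finset.Icc 1 k,
      (n - j).choose (k - j) * (n.choose j * n.choose (j - 1)) =
      n.choose k * (k.choose j * n.choose (j - 1)) := by
    intro j hj
    simp only [Finset.mem_Icc] at hj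
    rw [show (n - j).choose (k - j) * (n.choose j * n.choose (j - 1)) =
        (n.choose j * (n - j).choose (k - j)) * n.choose (j - 1) by ring,
      ← Nat.choose_mul hj.2]
    ring
  rw [Finset.sum_congr rfl h1, ← Finset.mul_sum]
  congr 1
  -- ∑_{j=1}^k C(k,j) C(n,j-1) = C(k+n, k-1) by Vandermonde
  rw [Nat.add_choose_eq n k (k-1)]
  -- reindex: antidiagonal (k-1) ∋ (a,b), a+b=k-1 ↔ j = b+1 ... term n.choose a * k.choose b
  rw [Finset.Nat.sum_antidiagonal_eq_sum_range_succ (fun a b => n.choose a * k.choose b)]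
  have hk1 : k - 1 + 1 = k := Nat.succ_pred_eq_of_pos hk
  rw [show Finset.Icc 1 k = Finset.map ⟨Nat.succ, Nat.succ_injective⟩ (Finset.range k) by
    ext x
    simp only [Finset.mem_Icc, Finset.mem_map, Finset.mem_range, Function.Embedding.coeFn_mk,
      Nat.succ_eq_add_one]
    constructor
    · rintro ⟨h1x, h2x⟩; exact ⟨x - 1, by omega, by omega⟩
    · rintro ⟨a, ha, rfl⟩; omega]
  rw [Finset.sum_map, show (k - 1).succ = k by omega]
  apply Finset.sum_congr rfl
  intro i hi
  simp only [Finset.mem_range] at hi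
  simp only [Function.Embedding.coeFn_mk, Nat.succ_eq_add_one, Nat.add_sub_cancel]
  rw [show k - 1 - i = k - (i + 1) by omega, Nat.choose_symm (by omega : i + 1 ≤ k), mul_comm]

lemma key_nat (n k : ℕ) (hk : 1 ≤ k) (hkn : k ≤ n) :
    n * ((n-1).choose (k-1) * (n+k).choose k) =
      (n + 1) * (n.choose k * (n+k).choose (k-1)) := by
  have h1 : n * (n-1).choose (k-1) = n.choose k * k := by
    have h := Nat.add_one_mul_choose_eq (n-1) (k-1)
    have e1 : n - 1 + 1 = n := by omega
    have e2 : k - 1 + 1 = k := by omega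
    simpa [Nat.succ_eq_add_one, e1, e2] using h
  have h2 : (n+k).choose k * k = (n+k).choose (k-1) * (n + 1) := by
    have h := Nat.choose_succ_right_eq (n+k) (k-1)
    have e2 : k - 1 + 1 = k := by omega
    have e3 : n + k - (k-1) = n + 1 := by omega
    rw [e2, e3] at h
    exact h
  calc n * ((n-1).choose (k-1) * (n+k).choose k)
      = (n * (n-1).choose (k-1)) * (n+k).choose k := by ring
    _ = n.choose k * ((n+k).choose k * k) := by rw [h1]; ring
    _ = n.choose k * ((n+k).choose (k-1) * (n+1)) := by rw [h2]
    _ = (n + 1) * (n.choose k * (n+k).choose (k-1)) := by ring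

/-- For `n ≥ k ≥ 1`, `w(n,k) = ∑_{j=1}^{k} C(n-j,k-j) · N(n,j)`. -/
theorem w_eq_sum_narayana (n k : ℕ) (hk : 1 ≤ k) (hkn : k ≤ n) :
    (w n k : ℚ) = ∑ j ∈ Finset.Icc 1 k, ((n - j).choose (k - j) : ℚ) * narayana n j := by
  have hn0 : n ≠ 0 := by omega
  have hnQ : (n : ℚ) ≠ 0 := by exact_mod_cast hn0
  have hsum : ∑ j ∈ Finset.Icc 1 k, ((n - j).choose (k - j) : ℚ) * narayana n j
      = ((n.choose k * (n + k).choose (k - 1) : ℕ) : ℚ) / n := by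
    rw [← mySumCollapse n k hk hkn]
    push_cast
    rw [Finset.sum_div]
    apply Finset.sum_congr rfl
    intro j hj
    simp only [narayana]
    push_cast
    ring
  rw [hsum]
  have hkey : ((n : ℚ)) * ((n-1).choose (k-1) * (n+k).choose k)
      = ((n : ℚ) + 1) * (n.choose k * (n+k).choose (k-1)) := by
    exact_mod_cast key_nat n k hk hkn
  show ((w n k : ℤ) : ℚ) = _
  rw [w]
  push_cast
  rw [eq_div_iff hnQ]
  linear_combination hkey
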